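/- A graph inverse semigroup S(E) admits a nontrivial strong grading (by some group Γ) if and only if the graph E is nonempty and has no source vertices. In particular: if E has a source vertex then every strong grading on S(E) is trivial, and if E is nonempty with no sources then for every positive integer n the map x y⁻¹ ↦ (|x| − |y|) + nℤ is a strong ℤ/nℤ-grading on S(E). -/

import Mathlib

/-! Graph inverse semigroups, modelled concretely (see the paper, §7): a graph is given
by `src rng : E → V`; a nonzero element of `S(E)` is uniquely `x y⁻¹` for paths `x, y`
with `r(x) = r(y)`, recorded as a pair of (starting vertex, edge list) pairs; `none` is
the zero.  `ValidGIS` carves out the elements of `S(E)` inside the raw carrier. -/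

variable {V : Type u} {E : Type u}

/-- `goodFrom src rng v l`: the edge list `l` forms a path starting at the vertex `v`. -/
def goodFrom (src rng : E → V) : V → List E → Prop
  | _, [] => True
  | v, e :: l => src e = v ∧ goodFrom src rng (rng e) l

/-- The end (range) vertex of the path starting at `v` with edge list `l`. -/
def pend (rng : E → V) : V → List E → V
  | v, [] => v
  | _, e :: l => pend rng (rng e) l

/-- Raw carrier for the graph inverse semigroup `S(E)`. -/
abbrev RawGIS (V E : Type u) : Type u := Option ((V × List E) × (V × List E))

/-- Validity of a raw element. -/
def ValidGIS (src rng : E → V) : RawGIS V E → Prop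
  | none => True
  | some (x, y) =>
      goodFrom src rng x.1 x.2 ∧ goodFrom src rng y.1 y.2 ∧
        pend rng x.1 x.2 = pend rng y.1 y.2

open Classical in
/-- Multiplication in `S(E)`. -/
noncomputable def gmul : RawGIS V E → RawGIS V E → RawGIS V E
  | some (x, y), some (u, w) =>
      if y.1 = u.1 ∧ y.2 <+: u.2 then
        some ((x.1, x.2 ++ u.2.drop y.2.length), w)
      else if u.1 = y.1 ∧ u.2 <+: y.2 then
        some (x, (w.1, w.2 ++ y.2.drop u.2.length))
      else none
  | _, _ => none

/-- `deg : S(E) ∖ {0} → Γ` is a grading of `S(E)`. -/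
def IsGradingOn {Γ : Type u'} [Group Γ] (src rng : E → V) (deg : RawGIS V E → Γ) :
    Prop :=
  ∀ a b : RawGIS V E, ValidGIS src rng a → ValidGIS src rng b → gmul a b ≠ none →
    deg (gmul a b) = deg a * deg b

/-- The component `S(E)_α` of a grading `deg`. -/
def compG {Γ : Type u'} (src rng : E → V) (deg : RawGIS V E → Γ) (α : Γ) :
    Set (RawGIS V E) :=
  {a | a = none ∨ (ValidGIS src rng a ∧ deg a = α)}

/-- The grading `deg` of `S(E)` is strong: `S(E)_α S(E)_β = S(E)_{αβ}`. -/
def IsStrongOn {Γ : Type u'} [Group Γ] (src rng : E → V) (deg : RawGIS V E → Γ) :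
    Prop :=
  ∀ α β : Γ, Set.image2 gmul (compG src rng deg α) (compG src rng deg β) =
    compG src rng deg (α * β)

/-- The `ℤ/nℤ`-degree map `x y⁻¹ ↦ (|x| - |y|) + nℤ` (written multiplicatively). -/
def degZMod (V E : Type u) (n : ℕ) : RawGIS V E → Multiplicative (ZMod n)
  | some (x, y) =>
      Multiplicative.ofAdd ((x.2.length : ZMod n) - (y.2.length : ZMod n))
  | none => 1

/-! ### Auxiliary lemmas -/

lemma pend_append (rng : E → V) : ∀ (l1 : List E) (v : V) (l2 : List E),
    pend rng v (l1 ++ l2) = pend rng (pend rng v l1) l2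
  | [], _, _ => rfl
  | e :: l, _, l2 => pend_append rng l (rng e) l2

lemma goodFrom_append (src rng : E → V) : ∀ (l1 : List E) (v : V) (l2 : List E),
    goodFrom src rng v (l1 ++ l2) ↔
      goodFrom src rng v l1 ∧ goodFrom src rng (pend rng v l1) l2
  | [], v, l2 => by simp [goodFrom, pend]
  | e :: l, v, l2 => by
      simp [goodFrom, pend, goodFrom_append src rng l (rng e) l2, and_assoc]

lemma pend_source {rng : E → V} {v : V} (hv : ∀ e : E, rng e ≠ v) :
    ∀ (l : List E) (w : V), pend rng w l = v → l = []
  | [], _, _ => rfl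
  | e :: l, _, h => by
      have hl : l = [] := pend_source hv l (rng e) h
      subst hl
      exact absurd h (hv e)

lemma valid_gmul (src rng : E → V) : ∀ {a b : RawGIS V E},
    ValidGIS src rng a → ValidGIS src rng b → ValidGIS src rng (gmul a b)
  | none, none, _, _ => trivial
  | none, some _, _, _ => trivial
  | some _, none, _, _ => trivial
  | some (x, y), some (u, w), ⟨hx, hy, hxy⟩, ⟨hu, hw, huw⟩ => by
      simp only [gmul]
      split_ifs with h1 h2
      · obtain ⟨h1a, ⟨t, ht⟩⟩ := h1
        have hdrop : u.2.drop y.2.length = t := by rw [← ht, List.drop_left]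
        rw [hdrop]
        have hu' : goodFrom src rng y.1 (y.2 ++ t) := by rw [h1a, ht]; exact hu
        rw [goodFrom_append] at hu'
        refine ⟨?_, hw, ?_⟩
        · rw [goodFrom_append]
          exact ⟨hx, by rw [hxy]; exact hu'.2⟩
        · show pend rng x.1 (x.2 ++ t) = pend rng w.1 w.2
          rw [pend_append, hxy, ← pend_append, ht, h1a]
          exact huw
      · obtain ⟨h2a, ⟨t, ht⟩⟩ := h2
        have hdrop : y.2.drop u.2.length = t := by rw [← ht, List.drop_left]
        rw [hdrop]
        have hy' : goodFrom src rng u.1 (u.2 ++ t) := by rw [h2a, ht]; exact hy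
        rw [goodFrom_append] at hy'
        refine ⟨hx, ?_, ?_⟩
        · rw [goodFrom_append]
          exact ⟨hw, by rw [← huw]; exact hy'.2⟩
        · show pend rng x.1 x.2 = pend rng w.1 (w.2 ++ t)
          rw [pend_append, ← huw, ← pend_append, ht, h2a]
          exact hxy
      · trivial

lemma degZMod_grading (src rng : E → V) (n : ℕ) :
    IsGradingOn src rng (degZMod V E n) := by
  intro a b ha hb hne
  match a, b with
  | none, none => exact absurd rfl hne
  | none, some _ => exact absurd rfl hne
  | some _, none => exact absurd rfl hne
  | some (x, y), some (u, w) =>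
    simp only [gmul] at hne ⊢
    split_ifs with h1 h2
    · simp only [degZMod, ← ofAdd_add]
      refine congrArg Multiplicative.ofAdd ?_
      rw [List.length_append, List.length_drop]
      push_cast [Nat.cast_sub h1.2.length_le]
      ring
    · simp only [degZMod, ← ofAdd_add]
      refine congrArg Multiplicative.ofAdd ?_
      rw [List.length_append, List.length_drop]
      push_cast [Nat.cast_sub h2.2.length_le]
      ring
    · rw [if_neg h1, if_neg h2] at hne
      exact absurd rfl hne

lemma exists_path (src rng : E → V) (h : ∀ v : V, ∃ e : E, rng e = v) :
    ∀ (k : ℕ) (v0 : V), ∃ (m : V) (z : List E),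
      goodFrom src rng m z ∧ pend rng m z = v0 ∧ z.length = k
  | 0, v0 => ⟨v0, [], trivial, rfl, rfl⟩
  | k + 1, v0 => by
      obtain ⟨m, z, hg, hp, hl⟩ := exists_path src rng h k v0
      obtain ⟨e, he⟩ := h m
      refine ⟨src e, e :: z, ⟨rfl, by rw [he]; exact hg⟩, ?_, by simp [hl]⟩
      show pend rng (rng e) z = v0
      rw [he]; exact hp

lemma degZMod_strong (src rng : E → V) (h : ∀ v : V, ∃ e : E, rng e = v)
    (n : ℕ) (hn : 0 < n) : IsStrongOn src rng (degZMod V E n) := by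
  haveI : NeZero n := ⟨hn.ne'⟩
  intro α β
  apply Set.Subset.antisymm
  · rintro c ⟨a, ha, b, hb, rfl⟩
    match a, b with
    | none, none => exact Or.inl rfl
    | none, some _ => exact Or.inl rfl
    | some _, none => exact Or.inl rfl
    | some p, some q =>
      rcases ha with h | ⟨hav, hda⟩
      · exact absurd h (by simp)
      rcases hb with h | ⟨hbv, hdb⟩
      · exact absurd h (by simp)
      by_cases hne : gmul (some p) (some q) = none
      · exact Or.inl hne
      · refine Or.inr ⟨valid_gmul src rng hav hbv, ?_⟩
        rw [degZMod_grading src rng n _ _ hav hbv hne, hda, hdb]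
  · rintro c (rfl | ⟨hcv, hdc⟩)
    · exact ⟨none, Or.inl rfl, none, Or.inl rfl, rfl⟩
    match c, hcv, hdc with
    | none, _, _ => exact ⟨none, Or.inl rfl, none, Or.inl rfl, rfl⟩
    | some ((v, x), (w, y)), ⟨hx, hy, hxy⟩, hdc =>
      obtain ⟨m, z, hz, hpz, hlz⟩ :=
        exists_path src rng h (((x.length : ZMod n) - Multiplicative.toAdd α).val)
          (pend rng v x)
      have hkz : ((z.length : ℕ) : ZMod n) =
          (x.length : ZMod n) - Multiplicative.toAdd α := by
        rw [hlz]
        exact ZMod.natCast_rightInverse _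
      set a : RawGIS V E := some ((v, x), (m, z)) with hadef
      set b : RawGIS V E := some ((m, z), (w, y)) with hbdef
      have hav : ValidGIS src rng a := ⟨hx, hz, hpz.symm⟩
      have hbv : ValidGIS src rng b := ⟨hz, hy, hpz.trans hxy⟩
      have hmul : gmul a b = some ((v, x), (w, y)) := by
        simp [hadef, hbdef, gmul, List.prefix_refl, List.drop_length]
      have hda : degZMod V E n a = α := by
        show Multiplicative.ofAdd ((x.length : ZMod n) - (z.length : ZMod n)) = α
        rw [hkz]
        simp
      have hdb : degZMod V E n b = β := by
        have h1 : degZMod V E n a * degZMod V E n b = α * β := by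
          rw [← degZMod_grading src rng n a b hav hbv (by rw [hmul]; simp), hmul, hdc]
        rw [hda] at h1
        exact mul_left_cancel h1
      exact ⟨a, Or.inr ⟨hav, hda⟩, b, Or.inr ⟨hbv, hdb⟩, hmul⟩

lemma source_trivial (src rng : E → V) {v : V} (hv : ∀ e : E, rng e ≠ v)
    {Γ : Type u'} [Group Γ] (deg : RawGIS V E → Γ)
    (hg : IsGradingOn src rng deg) (hs : IsStrongOn src rng deg) :
    ∀ α : Γ, α = 1 := by
  intro α
  set c : RawGIS V E := some ((v, []), (v, [])) with hc
  have hcv : ValidGIS src rng c := ⟨trivial, trivial, rfl⟩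
  have hmul : gmul c c = c := by simp [hc, gmul]
  have hdc : deg c = 1 := by
    have h1 := hg c c hcv hcv (by rw [hmul]; simp [hc])
    rw [hmul] at h1
    exact left_eq_mul.mp h1
  have hmem : c ∈ compG src rng deg (α * α⁻¹) := by
    rw [mul_inv_cancel]
    exact Or.inr ⟨hcv, hdc⟩
  rw [← hs α α⁻¹] at hmem
  obtain ⟨a, ha, b, hb, hab⟩ := hmem
  rcases ha with rfl | ⟨hav, hda⟩
  · exfalso
    match b, hab with
    | none, hab => simp [gmul, hc] at hab
    | some _, hab => simp [gmul, hc] at hab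
  rcases hb with rfl | ⟨hbv, hdb⟩
  · exfalso
    match a, hab with
    | none, hab => simp [gmul, hc] at hab
    | some _, hab => simp [gmul, hc] at hab
  match a, b with
  | some (X, Y), some (U, W) =>
    simp only [gmul] at hab
    obtain ⟨hX1, hX2⟩ : X.1 = v ∧ X.2 = [] := by
      split_ifs at hab with h1 h2
      · rw [hc, Option.some.injEq] at hab
        have := congrArg Prod.fst hab
        simp only at this
        exact ⟨congrArg Prod.fst this, (List.append_eq_nil_iff.mp (congrArg Prod.snd this)).1⟩
      · rw [hc, Option.some.injEq] at hab
        have := congrArg Prod.fst hab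
        simp only at this
        exact ⟨congrArg Prod.fst this, congrArg Prod.snd this⟩
    obtain ⟨hXg, hYg, hXY⟩ := hav
    rw [hX2, hX1] at hXY
    have hY2 : Y.2 = [] := pend_source hv Y.2 Y.1 hXY.symm
    rw [hY2] at hXY
    have hY1 : Y.1 = v := hXY.symm
    have hac : some (X, Y) = c := by
      rw [hc]
      congr 1
      exact Prod.ext (Prod.ext hX1 hX2) (Prod.ext hY1 hY2)
    rw [hac, hdc] at hda
    exact hda.symm

/-- Theorem `strgrgis` and its ingredients: a graph inverse semigroup `S(E)` admits a
nontrivial strong grading iff `E` is nonempty and has no source vertices.  In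
particular: if `E` has a source vertex then every strong grading on `S(E)` is trivial;
and if `E` is nonempty with no sources then for every `n > 0` the map
`x y⁻¹ ↦ (|x| - |y|) + nℤ` is a strong `ℤ/nℤ`-grading on `S(E)`. -/
theorem gis_nontrivial_strong_grading_iff {V E : Type u} (src rng : E → V) :
    ((∃ (Γ : Type u) (_i : Group Γ) (deg : RawGIS V E → Γ),
        IsGradingOn src rng deg ∧ IsStrongOn src rng deg ∧
          ∃ a : RawGIS V E, ValidGIS src rng a ∧ a ≠ none ∧ deg a ≠ 1) ↔
      (Nonempty V ∧ ∀ v : V, ∃ e : E, rng e = v)) ∧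
    ((∃ v : V, ∀ e : E, rng e ≠ v) →
      ∀ (Γ : Type u') (_i : Group Γ) (deg : RawGIS V E → Γ),
        IsGradingOn src rng deg → IsStrongOn src rng deg →
        ∀ a : RawGIS V E, ValidGIS src rng a → a ≠ none → deg a = 1) ∧
    ((Nonempty V ∧ ∀ v : V, ∃ e : E, rng e = v) →
      ∀ n : ℕ, 0 < n →
        IsGradingOn src rng (degZMod V E n) ∧ IsStrongOn src rng (degZMod V E n)) := by
  refine ⟨⟨?_, ?_⟩, ?_, ?_⟩
  · rintro ⟨Γ, _i, deg, hg, hs, a, hav, hane, hdeg⟩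
    obtain ⟨p, rfl⟩ := Option.ne_none_iff_exists'.mp hane
    refine ⟨⟨p.1.1⟩, fun v => ?_⟩
    by_contra hcon
    push_neg at hcon
    exact hdeg (source_trivial src rng hcon deg hg hs _)
  · rintro ⟨⟨v0⟩, hns⟩
    refine ⟨ULift.{u} (Multiplicative (ZMod 2)), inferInstance,
      fun a => ULift.up (degZMod V E 2 a), ?_, ?_, ?_⟩
    · intro a b ha hb hne
      have h1 := degZMod_grading src rng 2 a b ha hb hne
      exact ULift.ext _ _ h1
    · have hcomp : ∀ γ : ULift.{u} (Multiplicative (ZMod 2)),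
          compG src rng (fun a => ULift.up (degZMod V E 2 a)) γ =
            compG src rng (degZMod V E 2) γ.down := by
        intro γ
        ext a
        simp [compG, ULift.ext_iff]
      intro α β
      rw [hcomp, hcomp, hcomp]
      exact degZMod_strong src rng hns 2 (by norm_num) α.down β.down
    · obtain ⟨e, he⟩ := hns v0
      refine ⟨some ((src e, [e]), (v0, [])), ⟨⟨rfl, trivial⟩, trivial, ?_⟩, by simp, ?_⟩
      · show pend rng (rng e) [] = v0
        exact he
      · intro hcon
        have h2 : degZMod V E 2 (some ((src e, [e]), (v0, []))) = 1 :=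
          congrArg ULift.down hcon
        simp only [degZMod] at h2
        have h3 : ((([e] : List E).length : ZMod 2) - (([] : List E).length : ZMod 2)) =
            (0 : ZMod 2) := h2
        norm_num at h3
  · rintro ⟨v, hv⟩ Γ _i deg hg hs a hav hane
    exact source_trivial src rng hv deg hg hs (deg a)
  · rintro ⟨_, hns⟩ n hn
    exact ⟨degZMod_grading src rng n, degZMod_strong src rng hns n hn⟩
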